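/- Let K be a field of characteristic zero, n ≥ 1, and M ∈ M_n(K(X)). Then there exists a row vector u ∈ K[X]^n whose entries are polynomials of degree strictly less than n such that the n×n matrix Δ_n(u), whose rows are u, δ(u), ..., δ^{n−1}(u), is invertible over K(X); i.e., M admits a polynomial cyclic vector of degree less than n. -/

import Mathlib

set_option linter.unusedSectionVars false

/-- `δ(u) = u M + u′` for a row vector `u`, the derivation `der` being applied
entrywise. -/
def cvDelta {F : Type*} [Field F] {n : ℕ} (der : F → F)
    (M : Matrix (Fin n) (Fin n) F) (u : Fin n → F) : Fin n → F :=
  Matrix.vecMul u M + fun i => der (u i)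

open Polynomial

namespace CVaux

variable {K : Type*} [Field K] [CharZero K]

local notation "Ω" => RatFunc K
local notation "ρ" => algebraMap (Polynomial K) (RatFunc K)

variable (l : K)

/-- valuation-at-`l` predicate: `f` is regular at `l` and vanishes to order `≥ k`. -/
def Vv (k : ℕ) (f : Ω) : Prop :=
  ∃ p q : Polynomial K, q.eval l ≠ 0 ∧ (X - C l) ^ k ∣ p ∧ f * ρ q = ρ p

variable {l}

theorem Vv_alg {k : ℕ} {p : Polynomial K} (h : (X - C l) ^ k ∣ p) : Vv l k (ρ p) :=
  ⟨p, 1, by simp, h, by simp⟩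

theorem Vv_alg0 (p : Polynomial K) : Vv l 0 (ρ p) := Vv_alg (by simp)

theorem Vv_zero (k : ℕ) : Vv l k 0 := ⟨0, 1, by simp, dvd_zero _, by simp⟩

theorem Vv_one : Vv l 0 1 := by simpa using Vv_alg0 (l := l) 1

theorem Vv_mono {j k : ℕ} (hjk : j ≤ k) {f : Ω} (h : Vv l k f) : Vv l j f := by
  obtain ⟨p, q, hq, hd, he⟩ := h
  exact ⟨p, q, hq, dvd_trans (pow_dvd_pow _ hjk) hd, he⟩

theorem Vv_add {k : ℕ} {f g : Ω} (hf : Vv l k f) (hg : Vv l k g) : Vv l k (f + g) := by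
  obtain ⟨p1, q1, hq1, hd1, he1⟩ := hf
  obtain ⟨p2, q2, hq2, hd2, he2⟩ := hg
  refine ⟨p1 * q2 + p2 * q1, q1 * q2, by simp [hq1, hq2], ?_, ?_⟩
  · exact dvd_add (Dvd.dvd.mul_right hd1 _) (Dvd.dvd.mul_right hd2 _)
  · rw [map_mul, map_add, map_mul, map_mul, add_mul]
    calc f * (ρ q1 * ρ q2) + g * (ρ q1 * ρ q2)
        = (f * ρ q1) * ρ q2 + (g * ρ q2) * ρ q1 := by ring
      _ = ρ p1 * ρ q2 + ρ p2 * ρ q1 := by rw [he1, he2]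

theorem Vv_mul {j k : ℕ} {f g : Ω} (hf : Vv l j f) (hg : Vv l k g) : Vv l (j + k) (f * g) := by
  obtain ⟨p1, q1, hq1, hd1, he1⟩ := hf
  obtain ⟨p2, q2, hq2, hd2, he2⟩ := hg
  refine ⟨p1 * p2, q1 * q2, by simp [hq1, hq2], by rw [pow_add]; exact mul_dvd_mul hd1 hd2, ?_⟩
  rw [map_mul, map_mul]
  calc f * g * (ρ q1 * ρ q2) = (f * ρ q1) * (g * ρ q2) := by ring
  _ = ρ p1 * ρ p2 := by rw [he1, he2]

theorem Vv_neg {k : ℕ} {f : Ω} (hf : Vv l k f) : Vv l k (-f) := by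
  obtain ⟨p, q, hq, hd, he⟩ := hf
  exact ⟨-p, q, hq, (dvd_neg).2 hd, by rw [map_neg, neg_mul, he]⟩

theorem Vv_sub {k : ℕ} {f g : Ω} (hf : Vv l k f) (hg : Vv l k g) : Vv l k (f - g) := by
  rw [sub_eq_add_neg]; exact Vv_add hf (Vv_neg hg)

theorem Vv_sum {k : ℕ} {ι : Type*} (s : Finset ι) (f : ι → Ω) (h : ∀ i ∈ s, Vv l k (f i)) :
    Vv l k (∑ i ∈ s, f i) := by
  classical
  induction s using Finset.induction_on with
  | empty => simpa using Vv_zero k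
  | insert _ _ hx ih =>
      rw [Finset.sum_insert hx]
      exact Vv_add (h _ (Finset.mem_insert_self _ _))
        (ih fun i hi => h i (Finset.mem_insert_of_mem hi))

section der

variable (der : RatFunc K → RatFunc K)
  (h_add : ∀ a b : RatFunc K, der (a + b) = der a + der b)
  (h_mul : ∀ a b : RatFunc K, der (a * b) = a * der b + der a * b)
  (h_X : der RatFunc.X = 1)
  (h_C : ∀ c : K, der (RatFunc.C c) = 0)

include h_add in
theorem der_zero : der 0 = 0 := by
  have := h_add 0 0; simp at this; linear_combination (norm := abel) this

include h_mul in
theorem der_one : der 1 = 0 := by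
  have := h_mul 1 1; simp at this; linear_combination (norm := abel) this

include h_mul in
theorem der_pow (k : ℕ) : der (RatFunc.X ^ k) = (k : RatFunc K) * RatFunc.X ^ (k - 1) * der RatFunc.X := by
  induction k with
  | zero => simp [der_one der h_mul]
  | succ k ih =>
      rw [pow_succ, h_mul, ih]
      rcases Nat.eq_zero_or_pos k with hk | hk
      · subst hk; simp
      · have hk1 : k - 1 + 1 = k := Nat.succ_pred_eq_of_pos hk
        have h2 : (RatFunc.X : RatFunc K) ^ (k - 1) * RatFunc.X = RatFunc.X ^ k := by
          rw [← pow_succ, hk1]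
        push_cast [Nat.add_sub_cancel]
        linear_combination ((k : RatFunc K) * der RatFunc.X) * h2

include h_add h_mul h_X h_C in
theorem der_alg (p : Polynomial K) : der (ρ p) = ρ (derivative p) := by
  induction p using Polynomial.induction_on with
  | C a => rw [RatFunc.algebraMap_C]; simp [h_C]
  | add p q hp hq => rw [map_add, h_add, hp, hq, derivative_add, map_add]
  | monomial m a ih =>
      rw [map_mul, map_pow, RatFunc.algebraMap_C, RatFunc.algebraMap_X, h_mul,
        der_pow der h_mul, h_X, h_C, derivative_C_mul, derivative_X_pow, map_mul,
        map_mul, map_pow, RatFunc.algebraMap_X]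
      push_cast
      have : ρ (C ((m : K) + 1)) = (m : RatFunc K) + 1 := by
        rw [RatFunc.algebraMap_C]; push_cast; rw [map_add, map_natCast, map_one]
      rw [this, RatFunc.algebraMap_C]
      ring

include h_add h_mul h_X h_C in
theorem Vv_der {k : ℕ} {f : Ω} (hf : Vv l k f) : Vv l (k - 1) (der f) := by
  obtain ⟨p, q, hq, hd, he⟩ := hf
  have hder := congrArg der he
  rw [h_mul, der_alg der h_add h_mul h_X h_C, der_alg der h_add h_mul h_X h_C] at hder
  have hdp : (X - C l) ^ (k - 1) ∣ derivative p := by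
    obtain ⟨h1, rfl⟩ := hd
    rw [derivative_mul, derivative_X_sub_C_pow]
    refine dvd_add (Dvd.dvd.mul_right (Dvd.dvd.mul_left dvd_rfl _) _) ?_
    exact Dvd.dvd.mul_right (pow_dvd_pow _ (Nat.sub_le k 1)) _
  refine ⟨derivative p * q - p * derivative q, q * q, by simp [hq], ?_, ?_⟩
  · refine dvd_sub (hdp.mul_right _) ?_
    exact (dvd_trans (pow_dvd_pow _ (Nat.sub_le k 1)) hd).mul_right _
  · rw [map_mul, map_sub, map_mul, map_mul]
    linear_combination (ρ q) * hder - ρ (derivative q) * he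

end der


section ev

variable (l)

/-- The local ring at `l` inside `K(X)`. -/
def Rg : Subring (RatFunc K) where
  carrier := {f | Vv l 0 f}
  one_mem' := Vv_one
  mul_mem' := fun ha hb => by simpa using Vv_mul ha hb
  zero_mem' := Vv_zero 0
  add_mem' := Vv_add
  neg_mem' := Vv_neg

noncomputable def evFun (f : Ω) (h : Vv l 0 f) : K :=
  (h.choose.eval l) / (h.choose_spec.choose.eval l)

variable {l}

theorem evFun_eq {f : Ω} (h : Vv l 0 f) {p q : Polynomial K} (hq : q.eval l ≠ 0)
    (he : f * ρ q = ρ p) : evFun l f h = p.eval l / q.eval l := by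
  obtain ⟨hq0, -, he0⟩ := h.choose_spec.choose_spec
  have key : h.choose * q = p * h.choose_spec.choose := by
    apply RatFunc.algebraMap_injective K
    rw [map_mul, map_mul]
    linear_combination (ρ h.choose_spec.choose) * he - (ρ q) * he0
  have keyv := congrArg (Polynomial.eval l) key
  rw [eval_mul, eval_mul] at keyv
  rw [evFun, div_eq_div_iff hq0 hq]
  linear_combination keyv

theorem evFun_alg (p : Polynomial K) (h : Vv l 0 (ρ p)) : evFun l (ρ p) h = p.eval l := by
  rw [evFun_eq h (p := p) (q := 1) (by simp) (by simp)]; simp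

theorem evFun_vanish {f : Ω} (h1 : Vv l 1 f) (h : Vv l 0 f) : evFun l f h = 0 := by
  obtain ⟨p, q, hq, hd, he⟩ := h1
  rw [evFun_eq h hq he]
  have : p.eval l = 0 := by
    obtain ⟨t, rfl⟩ := hd
    simp
  simp [this]

variable (l)

noncomputable def ev : Rg l →+* K where
  toFun := fun f => evFun l f.1 f.2
  map_one' := by
    show evFun l (1 : Ω) Vv_one = 1
    rw [evFun_eq _ (p := 1) (q := 1) (by simp) (by simp)]; simp
  map_zero' := by
    show evFun l (0 : Ω) (Vv_zero 0) = 0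
    rw [evFun_eq _ (p := 0) (q := 1) (by simp) (by simp)]; simp
  map_mul' := by
    rintro ⟨x, hx⟩ ⟨y, hy⟩
    obtain ⟨p1, q1, hq1, -, he1⟩ := id hx
    obtain ⟨p2, q2, hq2, -, he2⟩ := id hy
    have hxy : x * y * ρ (q1 * q2) = ρ (p1 * p2) := by
      rw [map_mul, map_mul]
      calc x * y * (ρ q1 * ρ q2) = (x * ρ q1) * (y * ρ q2) := by ring
        _ = ρ p1 * ρ p2 := by rw [he1, he2]
    show evFun l _ _ = evFun l _ _ * evFun l _ _
    rw [evFun_eq hx hq1 he1, evFun_eq hy hq2 he2]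
    refine (evFun_eq (f := x * y) (by simpa using Vv_mul hx hy)
      (p := p1 * p2) (q := q1 * q2) (by simp [hq1, hq2]) hxy).trans ?_
    rw [eval_mul, eval_mul, div_mul_div_comm]
  map_add' := by
    rintro ⟨x, hx⟩ ⟨y, hy⟩
    obtain ⟨p1, q1, hq1, -, he1⟩ := id hx
    obtain ⟨p2, q2, hq2, -, he2⟩ := id hy
    have hxy : (x + y) * ρ (q1 * q2) = ρ (p1 * q2 + p2 * q1) := by
      rw [map_mul, map_add, map_mul, map_mul, add_mul]
      calc x * (ρ q1 * ρ q2) + y * (ρ q1 * ρ q2)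
          = (x * ρ q1) * ρ q2 + (y * ρ q2) * ρ q1 := by ring
        _ = ρ p1 * ρ q2 + ρ p2 * ρ q1 := by rw [he1, he2]
    show evFun l _ _ = evFun l _ _ + evFun l _ _
    rw [evFun_eq hx hq1 he1, evFun_eq hy hq2 he2]
    refine (evFun_eq (f := x + y) (Vv_add hx hy)
      (p := p1 * q2 + p2 * q1) (q := q1 * q2) (by simp [hq1, hq2]) hxy).trans ?_
    rw [eval_add, eval_mul, eval_mul, eval_mul]
    field_simp

theorem ev_apply (f : Rg l) : ev l f = evFun l (f : Ω) f.2 := rfl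

end ev

section approx

theorem approx_inv {d : Polynomial K} (hd : d.eval l ≠ 0) (N : ℕ) :
    ∃ b : Polynomial K, (X - C l) ^ N ∣ (1 - b * d) := by
  induction N with
  | zero => exact ⟨0, by simp⟩
  | succ N ih =>
      obtain ⟨b, t, ht⟩ := ih
      refine ⟨b + C (t.eval l / d.eval l) * (X - C l) ^ N, ?_⟩
      have : 1 - (b + C (t.eval l / d.eval l) * (X - C l) ^ N) * d
          = (X - C l) ^ N * (t - C (t.eval l / d.eval l) * d) := by
        rw [mul_sub]; rw [← ht]; ring
      rw [this, pow_succ]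
      refine mul_dvd_mul_left _ ?_
      rw [dvd_iff_isRoot]
      simp only [IsRoot, eval_sub, eval_mul, eval_C]
      field_simp
      simp

theorem approx {f : Ω} (hf : Vv l 0 f) (N : ℕ) : ∃ g : Polynomial K, Vv l N (f - ρ g) := by
  obtain ⟨p, q, hq, -, he⟩ := hf
  obtain ⟨b, hb⟩ := approx_inv hq N
  refine ⟨p * b, p * (1 - b * q), q, hq, hb.mul_left p, ?_⟩
  rw [sub_mul, map_mul, map_mul, map_sub, map_mul, map_one]
  linear_combination he

end approx

section Ymat

variable {n : ℕ}

theorem exists_Y (P : Matrix (Fin n) (Fin n) (Polynomial K)) (N : ℕ) :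
    ∃ Y : Matrix (Fin n) (Fin n) (Polynomial K),
      Y.map (Polynomial.eval l) = 1 ∧
      ∀ i j, (X - C l) ^ N ∣ (derivative (Y i j) - (P * Y) i j) := by
  induction N with
  | zero => exact ⟨1, by simp [Matrix.map_one], fun i j => by simpa using one_dvd _⟩
  | succ N ih =>
      obtain ⟨Y, hY1, hYd⟩ := ih
      set c : K := ((N : K) + 1)⁻¹ with hc
      have hc0 : ((N : K) + 1) ≠ 0 := by
        exact_mod_cast (Nat.cast_add_one_ne_zero N : ((N : K) + 1) ≠ 0)
      set G : Matrix (Fin n) (Fin n) (Polynomial K) :=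
        Matrix.of fun i j => (hYd i j).choose with hGdef
      have hG : ∀ i j, derivative (Y i j) - (P * Y) i j = (X - C l) ^ N * G i j :=
        fun i j => (hYd i j).choose_spec
      set Z : Matrix (Fin n) (Fin n) (Polynomial K) :=
        Matrix.of fun i j => C c * ((X - C l) ^ (N + 1) * G i j) with hZdef
      refine ⟨Y - Z, ?_, ?_⟩
      · ext i j
        have hz : (Z i j).eval l = 0 := by
          simp [hZdef, Matrix.of_apply, eval_mul, eval_pow]
        rw [Matrix.map_apply, Matrix.sub_apply, eval_sub, hz, sub_zero]
        simpa [Matrix.map_apply] using Matrix.ext_iff.mpr hY1 i j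
      · intro i j
        have hZij : Z i j = C c * ((X - C l) ^ (N + 1) * G i j) := rfl
        have hder : derivative (Z i j)
            = C c * (C ((N : K) + 1) * ((X - C l) ^ N * G i j))
              + C c * ((X - C l) ^ (N + 1) * derivative (G i j)) := by
          rw [hZij, derivative_C_mul, derivative_mul, derivative_X_sub_C_pow]
          push_cast [Nat.add_sub_cancel]
          ring
        have hcc : C c * C ((N : K) + 1) = (1 : Polynomial K) := by
          rw [← C_mul, hc, inv_mul_cancel₀ hc0, C_1]
        have key : derivative ((Y - Z) i j) - (P * (Y - Z)) i j
            = - (C c * ((X - C l) ^ (N + 1) * derivative (G i j))) + (P * Z) i j := by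
          rw [Matrix.sub_apply, derivative_sub, Matrix.mul_sub, Matrix.sub_apply, hder]
          linear_combination hG i j - ((X - C l) ^ N * G i j) * hcc
        rw [key]
        refine dvd_add (dvd_neg.mpr ?_) ?_
        · exact Dvd.dvd.mul_left (Dvd.dvd.mul_right dvd_rfl _) _
        · rw [Matrix.mul_apply]
          refine Finset.dvd_sum fun k _ => ?_
          exact Dvd.dvd.mul_left (Dvd.dvd.mul_left (Dvd.dvd.mul_right dvd_rfl _) _) _

theorem vecMul_sum_apply {α : Type*} [CommRing α] (v : Fin n → α) (Y : Matrix (Fin n) (Fin n) α)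
    (j : Fin n) : Matrix.vecMul v Y j = ∑ k, v k * Y k j := by
  simp [Matrix.vecMul, dotProduct]

theorem exists_u (Y : Matrix (Fin n) (Fin n) (Polynomial K))
    (hY1 : Y.map (Polynomial.eval l) = 1) :
    ∃ u : Fin n → Polynomial K,
      (∀ j, (u j).degree < (n : WithBot ℕ)) ∧
      (∀ j, (X - C l) ^ n ∣ (Matrix.vecMul u Y j - (X - C l) ^ (j : ℕ))) := by
  have hdet : (Y.det).eval l = 1 := by
    have h := RingHom.map_det (Polynomial.evalRingHom l) Y
    simp only [RingHom.mapMatrix_apply, Polynomial.coe_evalRingHom] at h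
    rw [h, hY1, Matrix.det_one]
  obtain ⟨b, hb⟩ := approx_inv (by rw [hdet]; exact one_ne_zero) n
  set B : Matrix (Fin n) (Fin n) (Polynomial K) := b • Y.adjugate with hBdef
  have hBY : ∀ i j, (X - C l) ^ n ∣ ((B * Y) i j - (1 : Matrix (Fin n) (Fin n) (Polynomial K)) i j) := by
    intro i j
    have : B * Y = b • (Y.det • (1 : Matrix (Fin n) (Fin n) (Polynomial K))) := by
      rw [hBdef, Matrix.smul_mul, Matrix.adjugate_mul]
    rw [this]
    have : (b • Y.det • (1 : Matrix (Fin n) (Fin n) (Polynomial K))) i j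
        - (1 : Matrix (Fin n) (Fin n) (Polynomial K)) i j
        = -((1 - b * Y.det) * (1 : Matrix (Fin n) (Fin n) (Polynomial K)) i j) := by
      simp only [Matrix.smul_apply, smul_eq_mul]
      ring
    rw [this]
    exact (hb.mul_right _).neg_right
  set v : Fin n → Polynomial K := fun j => (X - C l) ^ (j : ℕ) with hvdef
  set u0 : Fin n → Polynomial K := Matrix.vecMul v B with hu0def
  refine ⟨fun j => u0 j %ₘ (X - C l) ^ n, fun j => ?_, fun j => ?_⟩
  · have hm : ((X - C l) ^ n).Monic := (monic_X_sub_C l).pow n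
    have h1 := degree_modByMonic_lt (u0 j) hm
    have h2 : ((X - C l) ^ n).degree = (n : WithBot ℕ) := by
      rw [degree_pow, degree_X_sub_C]
      simp
    rwa [h2] at h1
  · set u : Fin n → Polynomial K := fun j => u0 j %ₘ (X - C l) ^ n with hudef
    have hu : ∀ k, (X - C l) ^ n ∣ (u k - u0 k) := by
      intro k
      have hm : ((X - C l) ^ n).Monic := (monic_X_sub_C l).pow n
      have hmd := modByMonic_add_div (u0 k) ((X - C l) ^ n)
      refine ⟨-(u0 k /ₘ (X - C l) ^ n), ?_⟩
      rw [hudef]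
      linear_combination hmd
    have h4 : (∑ k, v k * (1 : Matrix (Fin n) (Fin n) (Polynomial K)) k j) = v j := by
      calc (∑ k, v k * (1 : Matrix (Fin n) (Fin n) (Polynomial K)) k j)
          = Matrix.vecMul v 1 j := (vecMul_sum_apply v 1 j).symm
        _ = v j := by rw [Matrix.vecMul_one]
    have h5 : (∑ k, u0 k * Y k j) = ∑ k, v k * (B * Y) k j := by
      rw [← vecMul_sum_apply, ← vecMul_sum_apply, hu0def, Matrix.vecMul_vecMul]
    have hsplit : Matrix.vecMul u Y j - v j
        = (∑ k, (u k - u0 k) * Y k j)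
          + (∑ k, v k * ((B * Y) k j - (1 : Matrix (Fin n) (Fin n) (Polynomial K)) k j)) := by
      have e1 : ∑ k, (u k - u0 k) * Y k j
          = (∑ k, u k * Y k j) - ∑ k, u0 k * Y k j := by
        rw [← Finset.sum_sub_distrib]
        exact Finset.sum_congr rfl fun k _ => by ring
      have e2 : ∑ k, v k * ((B * Y) k j - (1 : Matrix (Fin n) (Fin n) (Polynomial K)) k j)
          = (∑ k, v k * (B * Y) k j) - ∑ k, v k * (1 : Matrix (Fin n) (Fin n) (Polynomial K)) k j := by
        rw [← Finset.sum_sub_distrib]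
        exact Finset.sum_congr rfl fun k _ => by ring
      rw [vecMul_sum_apply, e1, e2, h4, ← h5]
      ring
    rw [hsplit]
    refine dvd_add (Finset.dvd_sum fun k _ => (hu k).mul_right _)
      (Finset.dvd_sum fun k _ => (hBY k j).mul_left _)

end Ymat

section main

variable {n : ℕ}
variable (der : RatFunc K → RatFunc K)
  (h_add : ∀ a b : RatFunc K, der (a + b) = der a + der b)
  (h_mul : ∀ a b : RatFunc K, der (a * b) = a * der b + der a * b)
  (h_X : der RatFunc.X = 1)
  (h_C : ∀ c : K, der (RatFunc.C c) = 0)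

include h_add in
theorem der_neg (a : Ω) : der (-a) = - der a := by
  have h := h_add a (-a)
  simp only [add_neg_cancel, der_zero der h_add] at h
  linear_combination -h

include h_add in
theorem der_sub (a b : Ω) : der (a - b) = der a - der b := by
  rw [sub_eq_add_neg, h_add, der_neg der h_add, sub_eq_add_neg]

include h_add in
theorem der_sum {ι : Type*} (s : Finset ι) (f : ι → Ω) :
    der (∑ i ∈ s, f i) = ∑ i ∈ s, der (f i) := by
  classical
  induction s using Finset.induction_on with
  | empty => simpa using der_zero der h_add
  | insert _ _ hx ih => rw [Finset.sum_insert hx, h_add, ih, Finset.sum_insert hx]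

include h_add h_mul in
theorem vecMul_cvDelta (M : Matrix (Fin n) (Fin n) (RatFunc K))
    (Ya : Matrix (Fin n) (Fin n) (RatFunc K)) (x : Fin n → RatFunc K) (j : Fin n) :
    Matrix.vecMul (cvDelta der M x) Ya j
      = der (Matrix.vecMul x Ya j) + Matrix.vecMul x (M * Ya - Ya.map der) j := by
  classical
  simp only [vecMul_sum_apply, cvDelta, Pi.add_apply, Matrix.sub_apply, Matrix.map_apply,
    Matrix.mul_apply, der_sum der h_add, h_mul, add_mul, mul_sub]
  rw [Finset.sum_add_distrib, Finset.sum_add_distrib, Finset.sum_sub_distrib]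
  have hcomm : ∑ k, (∑ c, x c * M c k) * Ya k j = ∑ k, x k * ∑ c, M k c * Ya c j := by
    simp only [Finset.sum_mul, Finset.mul_sum]
    rw [Finset.sum_comm]
    exact Finset.sum_congr rfl fun k _ => Finset.sum_congr rfl fun c _ => by ring
  rw [hcomm]
  ring

include h_add h_mul h_X h_C in
theorem delta_iter_reg (M : Matrix (Fin n) (Fin n) (RatFunc K)) (hM : ∀ a b, Vv l 0 (M a b))
    (x : Fin n → RatFunc K) (hx : ∀ j, Vv l 0 (x j)) (i : ℕ) (j : Fin n) :
    Vv l 0 ((cvDelta der M)^[i] x j) := by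
  induction i generalizing j with
  | zero => exact hx j
  | succ i ih =>
      rw [Function.iterate_succ_apply']
      have hrfl : (cvDelta der M ((cvDelta der M)^[i] x)) j
          = Matrix.vecMul ((cvDelta der M)^[i] x) M j + der ((cvDelta der M)^[i] x j) := rfl
      rw [hrfl]
      refine Vv_add ?_ ?_
      · rw [vecMul_sum_apply]
        exact Vv_sum _ _ fun k _ => by simpa using Vv_mul (ih k) (hM k j)
      · simpa using Vv_der der h_add h_mul h_X h_C (ih j)

theorem dvd_derivative {m : ℕ} {p : Polynomial K} (h : (X - C l) ^ m ∣ p) :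
    (X - C l) ^ (m - 1) ∣ derivative p := by
  obtain ⟨t, rfl⟩ := h
  rw [derivative_mul, derivative_X_sub_C_pow]
  exact dvd_add (Dvd.dvd.mul_right (Dvd.dvd.mul_left dvd_rfl _) _)
    (Dvd.dvd.mul_right (pow_dvd_pow _ (Nat.sub_le m 1)) _)

theorem iter_deriv_dvd {m : ℕ} {p : Polynomial K} (h : (X - C l) ^ m ∣ p) (i : ℕ) :
    (X - C l) ^ (m - i) ∣ derivative^[i] p := by
  induction i with
  | zero => simpa using h
  | succ i ih =>
      rw [Function.iterate_succ_apply']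
      have := dvd_derivative (l := l) ih
      rwa [Nat.sub_sub] at this

theorem iter_deriv_add (i : ℕ) (p q : Polynomial K) :
    derivative^[i] (p + q) = derivative^[i] p + derivative^[i] q := by
  induction i with
  | zero => simp
  | succ i ih => rw [Function.iterate_succ_apply', Function.iterate_succ_apply',
      Function.iterate_succ_apply', ih, derivative_add]

include h_add h_mul h_X h_C in
theorem A_err (M : Matrix (Fin n) (Fin n) (RatFunc K)) (hM : ∀ a b, Vv l 0 (M a b))
    (N : ℕ) (P Y : Matrix (Fin n) (Fin n) (Polynomial K))
    (hMP : ∀ a b, Vv l N (M a b - ρ (P a b)))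
    (hYd : ∀ a b, (X - C l) ^ N ∣ (derivative (Y a b) - (P * Y) a b))
    (u : Fin n → Polynomial K) (i : ℕ) (j : Fin n) :
    Vv l (N - i) (Matrix.vecMul ((cvDelta der M)^[i] (fun k => ρ (u k))) (Y.map ρ) j
      - ρ (derivative^[i] (Matrix.vecMul u Y j))) := by
  have hE : ∀ a b, Vv l N ((M * Y.map ρ - (Y.map ρ).map der) a b) := by
    intro a b
    have hsplit : (M * Y.map ρ - (Y.map ρ).map der) a b
        = (∑ c, (M a c - ρ (P a c)) * ρ (Y c b))
          + (ρ ((P * Y) a b) - ρ (derivative (Y a b))) := by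
      simp only [Matrix.sub_apply, Matrix.map_apply, Matrix.mul_apply,
        der_alg der h_add h_mul h_X h_C, map_sum, map_mul, sub_mul]
      rw [Finset.sum_sub_distrib]
      ring
    rw [hsplit]
    refine Vv_add (Vv_sum _ _ fun c _ => by simpa using Vv_mul (hMP a c) (Vv_alg0 (Y c b))) ?_
    rw [← map_sub]
    refine Vv_alg ?_
    rw [show (P * Y) a b - derivative (Y a b) = -(derivative (Y a b) - (P * Y) a b) by ring]
    exact dvd_neg.mpr (hYd a b)
  induction i generalizing j with
  | zero =>
      rw [Function.iterate_zero_apply, Function.iterate_zero_apply]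
      have h0 : Matrix.vecMul (fun k => ρ (u k)) (Y.map ρ) j = ρ (Matrix.vecMul u Y j) := by
        simp only [vecMul_sum_apply, Matrix.map_apply, map_sum, map_mul]
      rw [h0, sub_self]
      exact Vv_zero _
  | succ i ih =>
      rw [Function.iterate_succ_apply', vecMul_cvDelta der h_add h_mul]
      have hkey : der (Matrix.vecMul ((cvDelta der M)^[i] (fun k => ρ (u k))) (Y.map ρ) j)
          + Matrix.vecMul ((cvDelta der M)^[i] (fun k => ρ (u k)))
              (M * Y.map ρ - (Y.map ρ).map der) j
          - ρ (derivative^[i + 1] (Matrix.vecMul u Y j))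
        = der (Matrix.vecMul ((cvDelta der M)^[i] (fun k => ρ (u k))) (Y.map ρ) j
              - ρ (derivative^[i] (Matrix.vecMul u Y j)))
          + Matrix.vecMul ((cvDelta der M)^[i] (fun k => ρ (u k)))
              (M * Y.map ρ - (Y.map ρ).map der) j := by
        rw [der_sub der h_add, der_alg der h_add h_mul h_X h_C,
          Function.iterate_succ_apply' derivative i (Matrix.vecMul u Y j)]
        ring
      rw [hkey]
      refine Vv_add ?_ ?_
      · have hder := Vv_der der h_add h_mul h_X h_C (ih j)
        rwa [Nat.sub_sub] at hder
      · rw [vecMul_sum_apply]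
        refine Vv_mono (Nat.sub_le _ _) (Vv_sum _ _ fun k _ => ?_)
        simpa using Vv_mul
          (delta_iter_reg der h_add h_mul h_X h_C M hM _ (fun j => Vv_alg0 (u j)) i k)
          (hE k j)

end main

end CVaux

open CVaux in
theorem exists_polynomial_cyclic_vector {K : Type*} [Field K] [CharZero K]
    {n : ℕ} (hn : 1 ≤ n)
    (der : RatFunc K → RatFunc K)
    (h_add : ∀ a b : RatFunc K, der (a + b) = der a + der b)
    (h_mul : ∀ a b : RatFunc K, der (a * b) = a * der b + der a * b)
    (h_X : der RatFunc.X = 1)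
    (h_C : ∀ c : K, der (RatFunc.C c) = 0)
    (M : Matrix (Fin n) (Fin n) (RatFunc K)) :
    ∃ u : Fin n → Polynomial K,
      (∀ j, (u j).degree < (n : WithBot ℕ)) ∧
      IsUnit (Matrix.of fun i j : Fin n =>
        (cvDelta der M)^[(i : ℕ)]
          (fun l => algebraMap (Polynomial K) (RatFunc K) (u l)) j).det := by
  classical
  -- choose a point `l` where all entries of `M` are regular
  set q0 : Polynomial K := ∏ ij : Fin n × Fin n, (M ij.1 ij.2).denom with hq0
  have hq0ne : q0 ≠ 0 := Finset.prod_ne_zero_iff.mpr fun ij _ => RatFunc.denom_ne_zero _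
  have hlex : ∃ l : K, q0.eval l ≠ 0 := by
    by_contra h
    push_neg at h
    exact hq0ne (Polynomial.zero_of_eval_zero _ h)
  obtain ⟨l, hl⟩ := hlex
  have hM : ∀ a b, Vv l 0 (M a b) := by
    intro a b
    refine ⟨(M a b).num, (M a b).denom, ?_, by simp, ?_⟩
    · intro h0
      apply hl
      obtain ⟨t, ht⟩ : (M a b).denom ∣ q0 :=
        Finset.dvd_prod_of_mem (fun ij : Fin n × Fin n => (M ij.1 ij.2).denom) (a := ((a, b) : Fin n × Fin n)) (Finset.mem_univ _)
      rw [ht, Polynomial.eval_mul, h0, zero_mul]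
    · exact ((div_eq_iff (RatFunc.algebraMap_ne_zero (RatFunc.denom_ne_zero (M a b)))).mp
        (RatFunc.num_div_denom (M a b))).symm
  set N : ℕ := n + 1 with hN
  choose P hP using fun a b => approx (hM a b) N
  obtain ⟨Y, hY1, hYd⟩ := exists_Y (l := l) (Matrix.of P) N
  obtain ⟨u, hdeg, hu⟩ := exists_u (l := l) Y hY1
  refine ⟨u, hdeg, ?_⟩
  rw [isUnit_iff_ne_zero]
  set ρ' := algebraMap (Polynomial K) (RatFunc K) with hρ'
  set Ya : Matrix (Fin n) (Fin n) (RatFunc K) := Y.map ρ' with hYa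
  set Δ : Matrix (Fin n) (Fin n) (RatFunc K) := Matrix.of fun i j : Fin n =>
    (cvDelta der M)^[(i : ℕ)] (fun l0 => ρ' (u l0)) j with hΔ
  have hMP : ∀ a b, Vv l N (M a b - ρ' ((Matrix.of P) a b)) := fun a b => hP a b
  have herr : ∀ i j : Fin n, Vv l (N - (i : ℕ))
      (Matrix.vecMul ((cvDelta der M)^[(i : ℕ)] fun k => ρ' (u k)) Ya j
        - ρ' (derivative^[(i : ℕ)] (Matrix.vecMul u Y j))) :=
    fun i j => A_err der h_add h_mul h_X h_C M hM N (Matrix.of P) Y hMP hYd u (i : ℕ) j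
  have hentry : ∀ i j : Fin n, (Δ * Ya) i j
      = (Matrix.vecMul ((cvDelta der M)^[(i : ℕ)] fun k => ρ' (u k)) Ya j
          - ρ' (derivative^[(i : ℕ)] (Matrix.vecMul u Y j)))
        + ρ' (derivative^[(i : ℕ)] (Matrix.vecMul u Y j)) := by
    intro i j
    rw [Matrix.mul_apply, vecMul_sum_apply]
    simp only [hΔ, Matrix.of_apply]
    ring
  have hreg : ∀ i j : Fin n, Vv l 0 ((Δ * Ya) i j) := by
    intro i j
    rw [hentry i j]
    exact Vv_add (Vv_mono (Nat.zero_le _) (herr i j)) (Vv_alg0 _)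
  set Wmat : Matrix (Fin n) (Fin n) (Rg l) :=
    Matrix.of fun i j => (⟨(Δ * Ya) i j, hreg i j⟩ : Rg l) with hW
  -- value of entries
  have hval : ∀ i j : Fin n,
      Polynomial.eval l (derivative^[(i : ℕ)] (Matrix.vecMul u Y j))
        = if i = j then (Nat.factorial (i : ℕ) : K) else 0 := by
    intro i j
    have hsplit : Matrix.vecMul u Y j
        = (X - Polynomial.C l) ^ (j : ℕ)
          + (Matrix.vecMul u Y j - (X - Polynomial.C l) ^ (j : ℕ)) := by ring
    rw [hsplit, iter_deriv_add]
    rw [Polynomial.eval_add]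
    have h2 : Polynomial.eval l
        (derivative^[(i : ℕ)] (Matrix.vecMul u Y j - (X - Polynomial.C l) ^ (j : ℕ))) = 0 := by
      have hd := iter_deriv_dvd (l := l) (hu j) (i : ℕ)
      have h1n : (1 : ℕ) ≤ n - (i : ℕ) := by omega
      have : (X - Polynomial.C l) ∣ derivative^[(i : ℕ)]
          (Matrix.vecMul u Y j - (X - Polynomial.C l) ^ (j : ℕ)) := by
        refine dvd_trans ?_ hd
        exact dvd_pow_self _ (by omega)
      have := Polynomial.dvd_iff_isRoot.mp this
      simpa [Polynomial.IsRoot] using this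
    rw [h2, add_zero, Polynomial.iterate_derivative_X_sub_pow]
    rcases eq_or_ne i j with rfl | hij
    · simp [Nat.descFactorial_self]
    · rcases lt_or_gt_of_ne (fun h => hij (Fin.ext h) : (i : ℕ) ≠ (j : ℕ)) with hlt | hgt
      · -- i < j : positive power of (X - C l) evaluates to zero
        simp only [Polynomial.eval_smul, smul_eq_mul, Polynomial.eval_pow,
          Polynomial.eval_sub, Polynomial.eval_X, Polynomial.eval_C, sub_self]
        rw [zero_pow (by omega : (j : ℕ) - (i : ℕ) ≠ 0)]
        simp [hij]
      · rw [Nat.descFactorial_eq_zero_iff_lt.mpr hgt]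
        simp [hij]
  have hWev : Wmat.map (ev l) = Matrix.diagonal (fun i : Fin n => (Nat.factorial (i : ℕ) : K)) := by
    ext i j
    have hsum : Wmat i j = (⟨_, Vv_mono (Nat.zero_le _) (herr i j)⟩ : Rg l)
        + (⟨ρ' (derivative^[(i : ℕ)] (Matrix.vecMul u Y j)), Vv_alg0 _⟩ : Rg l) := by
      apply Subtype.ext
      exact hentry i j
    rw [Matrix.map_apply, hsum, map_add, ev_apply, ev_apply]
    have h1 : evFun l _ (Vv_mono (Nat.zero_le _) (herr i j)) = 0 := by
      refine evFun_vanish (Vv_mono ?_ (herr i j)) _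
      omega
    rw [h1, zero_add]
    refine (evFun_alg (l := l) _ _).trans ?_
    rw [hval i j]
    simp [Matrix.diagonal]
  have hdetev : ev l Wmat.det = ∏ i : Fin n, (Nat.factorial (i : ℕ) : K) := by
    rw [RingHom.map_det, RingHom.mapMatrix_apply, hWev, Matrix.det_diagonal]
  have hWdet : Wmat.det ≠ 0 := by
    intro h0
    rw [h0, map_zero] at hdetev
    have : ∏ i : Fin n, (Nat.factorial (i : ℕ) : K) ≠ 0 :=
      Finset.prod_ne_zero_iff.mpr fun i _ =>
        Nat.cast_ne_zero.mpr (Nat.factorial_ne_zero _)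
    exact this hdetev.symm
  have hcoe : (Δ * Ya).det ≠ 0 := by
    have h1 : Wmat.map ((Rg l).subtype) = Δ * Ya := by
      ext i j
      rfl
    rw [← h1, ← RingHom.mapMatrix_apply, ← RingHom.map_det]
    intro h0
    exact hWdet (Subtype.ext h0)
  rw [Matrix.det_mul] at hcoe
  exact left_ne_zero_of_mul hcoe
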